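/- Let C ∈ (0,1), let {φ_i}_{i=1}^N be a frame for H_M with lower frame bound A, and set D = max_i ‖φ_i‖². Then for any unit norm x, the set K_x = {i : |⟨x,φ_i⟩|² > CA/N} satisfies |K_x| ≥ (1−C)·A/(D − CA/N) ≥ (1−C)·A/D. -/

import Mathlib

open Finset
open scoped RealInnerProductSpace BigOperators

/-- lower bound on the number of frame coefficients bounded away from zero. -/
theorem card_large_frame_coeffs_ge
    {H : Type*} [NormedAddCommGroup H] [InnerProductSpace ℝ H]
    {M N : ℕ} [FiniteDimensional ℝ H] (hdim : Module.finrank ℝ H = M)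
    (C : ℝ) (hC : C ∈ Set.Ioo (0 : ℝ) 1)
    (φ : Fin N → H) (A D : ℝ) (hA : 0 < A)
    (hframe : ∀ x : H, A * ‖x‖ ^ 2 ≤ ∑ i, ⟪x, φ i⟫ ^ 2)
    (hD : IsGreatest (Set.range fun i => ‖φ i‖ ^ 2) D)
    (x : H) (hx : ‖x‖ = 1) :
    (1 - C) * A / (D - C * A / N) ≤
        ((Finset.univ.filter fun i => C * A / N < ⟪x, φ i⟫ ^ 2).card : ℝ) ∧
      (1 - C) * A / D ≤ (1 - C) * A / (D - C * A / N) := by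
  obtain ⟨hC0, hC1⟩ := hC
  have hxA : A ≤ ∑ i, ⟪x, φ i⟫ ^ 2 := by
    have := hframe x
    rwa [hx, one_pow, mul_one] at this
  have hN : 0 < N := by
    by_contra h
    push_neg at h
    interval_cases N
    simp at hxA
    linarith
  have hNR : (0 : ℝ) < N := by exact_mod_cast hN
  have hCS : ∀ i, ⟪x, φ i⟫ ^ 2 ≤ ‖φ i‖ ^ 2 := by
    intro i
    have h := abs_real_inner_le_norm x (φ i)
    have : ⟪x, φ i⟫ ^ 2 = |⟪x, φ i⟫| ^ 2 := (sq_abs _).symm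
    rw [this]
    have h2 : |⟪x, φ i⟫| ^ 2 ≤ (‖x‖ * ‖φ i‖) ^ 2 := by
      apply pow_le_pow_left₀ (abs_nonneg _) h
    rw [hx, one_mul] at h2
    exact h2
  have hiD : ∀ i, ‖φ i‖ ^ 2 ≤ D := fun i => hD.2 ⟨i, rfl⟩
  have hAND : A ≤ N * D := by
    calc A ≤ ∑ i, ⟪x, φ i⟫ ^ 2 := hxA
    _ ≤ ∑ _i : Fin N, D := Finset.sum_le_sum fun i _ => (hCS i).trans (hiD i)
    _ = N * D := by simp [mul_comm]
  have hDpos : 0 < D := by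
    nlinarith
  have hden : 0 < D - C * A / N := by
    have h1 : C * A / N < D := by
      rw [div_lt_iff₀ hNR]; nlinarith
    linarith
  set K := (Finset.univ.filter fun i => C * A / N < ⟪x, φ i⟫ ^ 2) with hK
  have hsplit : (K.card : ℝ) + ((Finset.univ.filter fun i => ¬ (C * A / N < ⟪x, φ i⟫ ^ 2)).card : ℝ) = N := by
    have := Finset.card_filter_add_card_filter_not (s := (Finset.univ : Finset (Fin N)))
      (p := fun i => C * A / N < ⟪x, φ i⟫ ^ 2)
    rw [hK]
    exact_mod_cast by simpa using this
  have hmain : A ≤ K.card * D + (N - K.card) * (C * A / N) := by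
    have h1 : ∑ i ∈ K, ⟪x, φ i⟫ ^ 2 ≤ K.card * D := by
      have := Finset.sum_le_card_nsmul K (fun i => ⟪x, φ i⟫ ^ 2) D
        (fun i _ => (hCS i).trans (hiD i))
      simpa [nsmul_eq_mul] using this
    have h2 : ∑ i ∈ (Finset.univ.filter fun i => ¬ (C * A / N < ⟪x, φ i⟫ ^ 2)), ⟪x, φ i⟫ ^ 2
        ≤ ((Finset.univ.filter fun i => ¬ (C * A / N < ⟪x, φ i⟫ ^ 2)).card : ℝ) * (C * A / N) := by
      have := Finset.sum_le_card_nsmul (Finset.univ.filter fun i => ¬ (C * A / N < ⟪x, φ i⟫ ^ 2))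
        (fun i => ⟪x, φ i⟫ ^ 2) (C * A / N)
        (fun i hi => by simpa using not_lt.mp (Finset.mem_filter.mp hi).2)
      simpa [nsmul_eq_mul] using this
    have hsum : ∑ i, ⟪x, φ i⟫ ^ 2 = ∑ i ∈ K, ⟪x, φ i⟫ ^ 2
        + ∑ i ∈ (Finset.univ.filter fun i => ¬ (C * A / N < ⟪x, φ i⟫ ^ 2)), ⟪x, φ i⟫ ^ 2 := by
      rw [hK]
      exact (Finset.sum_filter_add_sum_filter_not _ _ _).symm
    nlinarith [hsplit]
  constructor
  · rw [div_le_iff₀ hden]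
    have hcard : (K.card : ℝ) ≤ N := by
      have := Finset.card_filter_le Finset.univ (fun i => C * A / N < ⟪x, φ i⟫ ^ 2)
      rw [hK]; exact_mod_cast by simpa using this
    have hexp : (N - (K.card:ℝ)) * (C * A / N) = C * A - K.card * (C * A / N) := by
      field_simp
    nlinarith [hmain]
  · apply div_le_div_of_nonneg_left _ hden _
    · nlinarith
    · have : 0 < C * A / N := by positivity
      linarith
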